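/- Let $\alpha > 1$ and suppose $c\, n i^{-\alpha} \le \lambda_i^{(n)} \le C n i^{-\alpha}$ for all $1 \le i \le n$ with $0 < c \le C$, and let $\tau^2, \sigma^2 > 0$. Then for $b_{ni} = \lambda_i^{(n)}/(\tau^2 + \sigma^2\lambda_i^{(n)})$, the ratio $\left(\sum_{i=1}^n b_{ni}\right) / \left(\sum_{i=1}^n b_{ni}^2\right)$ is bounded above and below by positive constants independent of $n$ (for $n$ large). -/

import Mathlib

open Finset Filter

lemma tail_sum_le' (α : ℝ) (hα : 1 < α) (m n : ℕ) (hm : 1 ≤ m) (hmn : m ≤ n) :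
    ∑ i ∈ Finset.Ioc m n, (i : ℝ) ^ (-α) ≤ (m : ℝ) ^ (1 - α) / (α - 1) := by
  have hm0 : (0:ℝ) < m := by exact_mod_cast hm
  have hrw : ∑ i ∈ Finset.Ioc m n, (i : ℝ) ^ (-α)
      = ∑ i ∈ Finset.Ico m n, ((i + 1 : ℕ) : ℝ) ^ (-α) := by
    rw [← Finset.Icc_add_one_left_eq_Ioc, ← Finset.Ico_add_one_right_eq_Icc, ← Finset.map_add_right_Ico m n 1,
      Finset.sum_map]
    rfl
  have hanti : AntitoneOn (fun x : ℝ => x ^ (-α)) (Set.Icc (m : ℝ) n) := by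
    intro x hx y hy hxy
    have hx0 : 0 < x := lt_of_lt_of_le hm0 hx.1
    have hy0 : 0 < y := lt_of_lt_of_le hm0 hy.1
    simp only [Real.rpow_neg hx0.le, Real.rpow_neg hy0.le]
    exact inv_anti₀ (Real.rpow_pos_of_pos hx0 α)
      (Real.rpow_le_rpow hx0.le hxy (by linarith))
  have hint := AntitoneOn.sum_le_integral_Ico hmn hanti
  have hI : ∫ x in (m:ℝ)..(n:ℝ), x ^ (-α)
      = ((n:ℝ) ^ (-α + 1) - (m:ℝ) ^ (-α + 1)) / (-α + 1) := by
    apply integral_rpow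
    right
    constructor
    · intro h; have := neg_injective h; linarith
    · rw [Set.uIcc_of_le (by exact_mod_cast hmn : (m:ℝ) ≤ n)]
      intro h
      exact absurd h.1 (by linarith)
  rw [hrw]
  refine hint.trans ?_
  rw [hI]
  have hn0 : (0:ℝ) < n := lt_of_lt_of_le hm0 (by exact_mod_cast hmn)
  have h1 : (0:ℝ) ≤ (n:ℝ) ^ (-α + 1) := (Real.rpow_pos_of_pos hn0 _).le
  have h2 : ((n:ℝ) ^ (-α + 1) - (m:ℝ) ^ (-α + 1)) / (-α + 1)
      = ((m:ℝ) ^ (-α + 1) - (n:ℝ) ^ (-α + 1)) / (α - 1) := by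
    rw [div_eq_div_iff (by linarith) (by linarith)]; ring
  rw [h2]
  have h3 : (1 : ℝ) - α = -α + 1 := by ring
  rw [h3]
  apply div_le_div_of_nonneg_right _ (by linarith)
  linarith

set_option maxHeartbeats 1000000

/-- under the two-sided eigenvalue bound, the ratio
`(∑ bₙᵢ)/(∑ bₙᵢ²)` is bounded above and below by positive constants for large `n`. -/
theorem stmt18
    (τ2 σ2 α : ℝ) (hτ : 0 < τ2) (hσ : 0 < σ2) (hα : 1 < α)
    (lam : ℕ → ℕ → ℝ)
    (c C : ℝ) (hc : 0 < c) (hcC : c ≤ C)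
    (hlb : ∀ (n i : ℕ), 1 ≤ i → i ≤ n → c * (n : ℝ) * (i : ℝ) ^ (-α) ≤ lam n i)
    (hub : ∀ (n i : ℕ), 1 ≤ i → i ≤ n → lam n i ≤ C * (n : ℝ) * (i : ℝ) ^ (-α)) :
    ∃ c₁ c₂ : ℝ, 0 < c₁ ∧ c₁ ≤ c₂ ∧
      ∀ᶠ n : ℕ in atTop,
        c₁ ≤ (∑ i ∈ Finset.Icc 1 n, lam n i / (τ2 + σ2 * lam n i)) /
              (∑ i ∈ Finset.Icc 1 n, (lam n i / (τ2 + σ2 * lam n i)) ^ 2) ∧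
        (∑ i ∈ Finset.Icc 1 n, lam n i / (τ2 + σ2 * lam n i)) /
              (∑ i ∈ Finset.Icc 1 n, (lam n i / (τ2 + σ2 * lam n i)) ^ 2) ≤ c₂ := by
  have hα0 : (0:ℝ) < α := by linarith
  set b0 : ℝ := c / (τ2 + σ2 * c) with hb0def
  have hb0pos : 0 < b0 := div_pos hc (by positivity)
  set K : ℝ := 1 / σ2 + C * 2 ^ α / (τ2 * (α - 1)) with hKdef
  have hCpos : 0 < C := lt_of_lt_of_le hc hcC
  have hKpos : 0 < K := by
    rw [hKdef]
    have h2 : 0 < C * 2 ^ α / (τ2 * (α - 1)) :=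
      div_pos (mul_pos hCpos (Real.rpow_pos_of_pos two_pos α)) (mul_pos hτ (by linarith))
    have h1 : 0 < 1 / σ2 := by positivity
    linarith
  refine ⟨σ2, max σ2 (K / b0 ^ 2), hσ, le_max_left _ _, ?_⟩
  have htend : Tendsto (fun n : ℕ => (n : ℝ) ^ (1/α)) atTop atTop :=
    (tendsto_rpow_atTop (by positivity)).comp tendsto_natCast_atTop_atTop
  filter_upwards [htend.eventually_ge_atTop 2] with n hn2
  -- basic setup
  have hn1 : 1 ≤ n := by
    rcases Nat.eq_zero_or_pos n with h | h
    · subst h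
      rw [Nat.cast_zero, Real.zero_rpow (by positivity : 1/α ≠ 0)] at hn2
      linarith
    · exact h
  have hnR : (1:ℝ) ≤ n := by exact_mod_cast hn1
  set m : ℕ := ⌊(n : ℝ) ^ (1/α)⌋₊ with hmdef
  have hm1 : 1 ≤ m := Nat.le_floor (by push_cast; linarith)
  have hmR : (1:ℝ) ≤ m := by exact_mod_cast hm1
  have hm0 : (0:ℝ) < m := by linarith
  have hmle : (m : ℝ) ≤ (n : ℝ) ^ (1/α) := Nat.floor_le (by positivity)
  have hmn : m ≤ n := by
    have h1 : (n : ℝ) ^ (1/α) ≤ (n:ℝ) ^ (1:ℝ) :=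
      Real.rpow_le_rpow_of_exponent_le hnR (by rw [div_le_one hα0]; linarith)
    rw [Real.rpow_one] at h1
    exact_mod_cast hmle.trans h1
  -- positivity and basic bounds
  have hlampos : ∀ i ∈ Finset.Icc 1 n, 0 < lam n i := by
    intro i hi
    rw [Finset.mem_Icc] at hi
    have hi0 : (0:ℝ) < i := by exact_mod_cast hi.1
    have h1 := hlb n i hi.1 hi.2
    have hpos : 0 < c * (n:ℝ) * (i:ℝ) ^ (-α) := by positivity
    linarith
  have hden : ∀ i ∈ Finset.Icc 1 n, 0 < τ2 + σ2 * lam n i := by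
    intro i hi
    have := hlampos i hi
    positivity
  have hbnonneg : ∀ i ∈ Finset.Icc 1 n, 0 ≤ lam n i / (τ2 + σ2 * lam n i) := by
    intro i hi
    exact div_nonneg (hlampos i hi).le (hden i hi).le
  have hbub : ∀ i ∈ Finset.Icc 1 n, lam n i / (τ2 + σ2 * lam n i) ≤ 1 / σ2 := by
    intro i hi
    rw [div_le_div_iff₀ (hden i hi) hσ]
    nlinarith [(hlampos i hi).le]
  set S : ℝ := ∑ i ∈ Finset.Icc 1 n, lam n i / (τ2 + σ2 * lam n i) with hSdef
  set Q : ℝ := ∑ i ∈ Finset.Icc 1 n, (lam n i / (τ2 + σ2 * lam n i)) ^ 2 with hQdef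
  -- lower bound on Q
  have hblow : ∀ i ∈ Finset.Icc 1 m, b0 ≤ lam n i / (τ2 + σ2 * lam n i) := by
    intro i hi
    rw [Finset.mem_Icc] at hi
    have hin : i ≤ n := hi.2.trans hmn
    have hi0 : (0:ℝ) < i := by exact_mod_cast hi.1
    have hiα : (i:ℝ) ^ α ≤ (n:ℝ) := by
      have h1 : (i:ℝ) ≤ (n:ℝ) ^ (1/α) := le_trans (by exact_mod_cast hi.2) hmle
      have h2 : (i:ℝ) ^ α ≤ ((n:ℝ) ^ (1/α)) ^ α := Real.rpow_le_rpow hi0.le h1 hα0.le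
      rwa [← Real.rpow_mul (by positivity : (0:ℝ) ≤ n), one_div_mul_cancel hα0.ne',
        Real.rpow_one] at h2
    have hone : (1:ℝ) ≤ (n:ℝ) * (i:ℝ) ^ (-α) := by
      rw [Real.rpow_neg hi0.le, ← div_eq_mul_inv, le_div_iff₀ (Real.rpow_pos_of_pos hi0 α)]
      linarith
    have hlamc : c ≤ lam n i := by
      have h1 := hlb n i hi.1 hin
      nlinarith
    have hdeni : 0 < τ2 + σ2 * lam n i :=
      hden i (Finset.mem_Icc.mpr ⟨hi.1, hin⟩)
    rw [hb0def, div_le_div_iff₀ (by positivity) hdeni]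
    nlinarith [mul_le_mul_of_nonneg_right hlamc hτ.le]
  have hQlb : (m:ℝ) * b0 ^ 2 ≤ Q := by
    have h1 : ∑ i ∈ Finset.Icc 1 m, (lam n i / (τ2 + σ2 * lam n i)) ^ 2 ≤ Q := by
      apply Finset.sum_le_sum_of_subset_of_nonneg (Finset.Icc_subset_Icc_right hmn)
      intro i hi _
      positivity
    refine le_trans ?_ h1
    have h2 : ∀ i ∈ Finset.Icc 1 m, b0 ^ 2 ≤ (lam n i / (τ2 + σ2 * lam n i)) ^ 2 := by
      intro i hi
      exact pow_le_pow_left₀ hb0pos.le (hblow i hi) 2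
    calc (m:ℝ) * b0 ^ 2 = (Finset.Icc 1 m).card • (b0 ^ 2) := by
          rw [nsmul_eq_mul, Nat.card_Icc]; norm_num
      _ ≤ ∑ i ∈ Finset.Icc 1 m, (lam n i / (τ2 + σ2 * lam n i)) ^ 2 :=
          Finset.card_nsmul_le_sum _ _ _ h2
  have hQpos : 0 < Q := lt_of_lt_of_le (mul_pos hm0 (pow_pos hb0pos 2)) hQlb
  -- key estimate : n * m^(1-α) ≤ 2^α * m
  have h2α : (0:ℝ) < 2 ^ α := Real.rpow_pos_of_pos two_pos α
  have hmαpos : 0 < (m:ℝ) ^ α := Real.rpow_pos_of_pos hm0 α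
  have hnm : (n:ℝ) * (m:ℝ) ^ (1 - α) ≤ 2 ^ α * m := by
    have hhalf : (n:ℝ) ^ (1/α) / 2 ≤ m := by
      have h1 := Nat.lt_floor_add_one ((n : ℝ) ^ (1/α))
      rw [← hmdef] at h1
      linarith
    have hmα : (n:ℝ) / 2 ^ α ≤ (m:ℝ) ^ α := by
      have h2 : ((n:ℝ) ^ (1/α) / 2) ^ α ≤ (m:ℝ) ^ α :=
        Real.rpow_le_rpow (by positivity) hhalf hα0.le
      rwa [Real.div_rpow (by positivity) (by norm_num),
        ← Real.rpow_mul (by positivity : (0:ℝ) ≤ n), one_div_mul_cancel hα0.ne',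
        Real.rpow_one] at h2
    have hn2α : (n:ℝ) ≤ 2 ^ α * (m:ℝ) ^ α := by
      rw [div_le_iff₀ h2α] at hmα
      linarith
    have hrwm : (m:ℝ) ^ (1 - α) = (m:ℝ) / (m:ℝ) ^ α := by
      rw [Real.rpow_sub hm0, Real.rpow_one]
    rw [hrwm, ← mul_div_assoc, div_le_iff₀ hmαpos]
    calc (n:ℝ) * m ≤ (2 ^ α * (m:ℝ) ^ α) * m := mul_le_mul_of_nonneg_right hn2α hm0.le
      _ = 2 ^ α * m * (m:ℝ) ^ α := by ring
  -- upper bound on S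
  have hIcc : ∀ k : ℕ, Finset.Icc 1 k = Finset.Ioc 0 k := by
    intro k; ext x; simp only [Finset.mem_Icc, Finset.mem_Ioc]; omega
  have hSub : S ≤ (m:ℝ) * K := by
    have hsplit : S = (∑ i ∈ Finset.Ioc 0 m, lam n i / (τ2 + σ2 * lam n i))
        + ∑ i ∈ Finset.Ioc m n, lam n i / (τ2 + σ2 * lam n i) := by
      rw [hSdef, hIcc n, ← Finset.sum_Ioc_consecutive _ (Nat.zero_le m) hmn]
    have hpart1 : ∑ i ∈ Finset.Ioc 0 m, lam n i / (τ2 + σ2 * lam n i) ≤ (m:ℝ) * (1/σ2) := by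
      have hterm : ∀ i ∈ Finset.Ioc 0 m, lam n i / (τ2 + σ2 * lam n i) ≤ 1/σ2 := by
        intro i hi
        rw [Finset.mem_Ioc] at hi
        exact hbub i (Finset.mem_Icc.mpr ⟨hi.1, hi.2.trans hmn⟩)
      calc ∑ i ∈ Finset.Ioc 0 m, lam n i / (τ2 + σ2 * lam n i)
          ≤ (Finset.Ioc 0 m).card • (1/σ2 : ℝ) := Finset.sum_le_card_nsmul _ _ _ hterm
        _ = (m:ℝ) * (1/σ2) := by rw [nsmul_eq_mul, Nat.card_Ioc]; norm_num
    have hpart2 : ∑ i ∈ Finset.Ioc m n, lam n i / (τ2 + σ2 * lam n i)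
        ≤ (C * (n:ℝ) / τ2) * ∑ i ∈ Finset.Ioc m n, (i:ℝ) ^ (-α) := by
      rw [Finset.mul_sum]
      apply Finset.sum_le_sum
      intro i hi
      rw [Finset.mem_Ioc] at hi
      have hi1 : 1 ≤ i := hm1.trans hi.1.le
      have hi0 : (0:ℝ) < i := by exact_mod_cast hi1
      have hmem : i ∈ Finset.Icc 1 n := Finset.mem_Icc.mpr ⟨hi1, hi.2⟩
      have hl := (hlampos i hmem).le
      have h1 : lam n i / (τ2 + σ2 * lam n i) ≤ lam n i / τ2 := by
        apply div_le_div_of_nonneg_left hl hτ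
        linarith [mul_nonneg hσ.le hl]
      refine h1.trans ?_
      rw [div_le_iff₀ hτ]
      have hu := hub n i hi1 hi.2
      calc lam n i ≤ C * (n:ℝ) * (i:ℝ) ^ (-α) := hu
        _ = C * (n:ℝ) / τ2 * (i:ℝ) ^ (-α) * τ2 := by field_simp
    have htail := tail_sum_le' α hα m n hm1 hmn
    have h2 : (C * (n:ℝ) / τ2) * ∑ i ∈ Finset.Ioc m n, (i:ℝ) ^ (-α)
        ≤ (C * (n:ℝ) / τ2) * ((m:ℝ) ^ (1 - α) / (α - 1)) := by
      apply mul_le_mul_of_nonneg_left htail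
      positivity
    have h3 : (C * (n:ℝ) / τ2) * ((m:ℝ) ^ (1 - α) / (α - 1))
        ≤ (m:ℝ) * (C * 2 ^ α / (τ2 * (α - 1))) := by
      have heq : (C * (n:ℝ) / τ2) * ((m:ℝ) ^ (1 - α) / (α - 1))
          = ((n:ℝ) * (m:ℝ) ^ (1 - α)) * (C / (τ2 * (α - 1))) := by
        field_simp
      have heq2 : (m:ℝ) * (C * 2 ^ α / (τ2 * (α - 1)))
          = (2 ^ α * (m:ℝ)) * (C / (τ2 * (α - 1))) := by
        field_simp
      rw [heq, heq2]
      exact mul_le_mul_of_nonneg_right hnm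
        (div_nonneg hCpos.le (mul_nonneg hτ.le (by linarith)))
    rw [hsplit, hKdef]
    have h4 := hpart2.trans (h2.trans h3)
    rw [mul_add]
    linarith
  constructor
  · -- lower bound σ2 ≤ S / Q
    rw [le_div_iff₀ hQpos]
    have hterm : ∀ i ∈ Finset.Icc 1 n,
        σ2 * (lam n i / (τ2 + σ2 * lam n i)) ^ 2 ≤ lam n i / (τ2 + σ2 * lam n i) := by
      intro i hi
      have h1 := hbnonneg i hi
      have h2 := hbub i hi
      have hσb : lam n i / (τ2 + σ2 * lam n i) * σ2 ≤ 1 := by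
        rw [le_div_iff₀ hσ] at h2
        linarith
      linarith [mul_le_mul_of_nonneg_right hσb h1]
    calc σ2 * Q = ∑ i ∈ Finset.Icc 1 n, σ2 * (lam n i / (τ2 + σ2 * lam n i)) ^ 2 := by
          rw [hQdef, Finset.mul_sum]
      _ ≤ S := Finset.sum_le_sum hterm
  · -- upper bound
    refine le_trans ?_ (le_max_right σ2 (K / b0 ^ 2))
    have h1 : S / Q ≤ ((m:ℝ) * K) / ((m:ℝ) * b0 ^ 2) :=
      div_le_div₀ (mul_nonneg hm0.le hKpos.le) hSub (mul_pos hm0 (pow_pos hb0pos 2)) hQlb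
    refine h1.trans (le_of_eq ?_)
    rw [mul_div_mul_left _ _ (ne_of_gt hm0)]
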